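/- For Roe averages of two polytropic gas states with positive pressures and densities, the quantity H* − (u*)²/2 is strictly positive; precisely, H* − (u*)²/2 = [½ ρ* (u_r − u_l)² + (ρ_l + ρ*) c_l²/(γ−1) + (ρ* + ρ_r) c_r²/(γ−1)] / (√ρ_l + √ρ_r)², where ρ* = √(ρ_l ρ_r). In particular the Roe-average sound speed c* = √((γ−1)(H* − (u*)²/2)) is well defined and real. -/
import Mathlib

lemma roe_aux (γ a b ul ur cl cr ρl ρr : ℝ) (hg : γ - 1 ≠ 0) (ha : 0 < a) (hb : 0 < b)
    (ha2 : a ^ 2 = ρl) (hb2 : b ^ 2 = ρr) :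
    (a * (ul ^ 2 / 2 + cl ^ 2 / (γ - 1)) + b * (ur ^ 2 / 2 + cr ^ 2 / (γ - 1))) / (a + b)
      - ((a * ul + b * ur) / (a + b)) ^ 2 / 2
    = (a * b * (ur - ul) ^ 2 / 2 + (ρl + a * b) * cl ^ 2 / (γ - 1)
        + (a * b + ρr) * cr ^ 2 / (γ - 1)) / (a + b) ^ 2 := by
  subst ha2 hb2
  have hab : a + b ≠ 0 := by positivity
  field_simp
  ring

/-- For the Roe averages of two polytropic gas states, H* − (u*)²/2 is strictly
positive, with the explicit formula (3.4.9); hence the Roe sound speed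
c* = √((γ−1)(H* − (u*)²/2)) is well defined. -/
theorem roe_sound_speed_positive (γ : ℝ) (hγ : 1 < γ)
    (ρl ρr ul ur cl cr : ℝ) (hρl : 0 < ρl) (hρr : 0 < ρr)
    (hcl : 0 < cl) (hcr : 0 < cr)
    (Hl Hr ρstar ustar Hstar : ℝ)
    (hHl : Hl = ul ^ 2 / 2 + cl ^ 2 / (γ - 1))
    (hHr : Hr = ur ^ 2 / 2 + cr ^ 2 / (γ - 1))
    (hρ : ρstar = Real.sqrt (ρl * ρr))
    (hu : ustar = (Real.sqrt ρl * ul + Real.sqrt ρr * ur)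
        / (Real.sqrt ρl + Real.sqrt ρr))
    (hH : Hstar = (Real.sqrt ρl * Hl + Real.sqrt ρr * Hr)
        / (Real.sqrt ρl + Real.sqrt ρr)) :
    Hstar - ustar ^ 2 / 2
      = (ρstar * (ur - ul) ^ 2 / 2 + (ρl + ρstar) * cl ^ 2 / (γ - 1)
          + (ρstar + ρr) * cr ^ 2 / (γ - 1))
        / (Real.sqrt ρl + Real.sqrt ρr) ^ 2
    ∧ 0 < Hstar - ustar ^ 2 / 2 := by
  have ha : 0 < Real.sqrt ρl := Real.sqrt_pos.2 hρl
  have hb : 0 < Real.sqrt ρr := Real.sqrt_pos.2 hρr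
  have ha2 : Real.sqrt ρl ^ 2 = ρl := Real.sq_sqrt hρl.le
  have hb2 : Real.sqrt ρr ^ 2 = ρr := Real.sq_sqrt hρr.le
  have hab : Real.sqrt (ρl * ρr) = Real.sqrt ρl * Real.sqrt ρr :=
    Real.sqrt_mul hρl.le _
  have hg : 0 < γ - 1 := by linarith
  have key : Hstar - ustar ^ 2 / 2
      = (ρstar * (ur - ul) ^ 2 / 2 + (ρl + ρstar) * cl ^ 2 / (γ - 1)
          + (ρstar + ρr) * cr ^ 2 / (γ - 1))
        / (Real.sqrt ρl + Real.sqrt ρr) ^ 2 := by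
    rw [hH, hu, hHl, hHr, hρ, hab]
    exact roe_aux γ _ _ ul ur cl cr ρl ρr hg.ne' ha hb ha2 hb2
  refine ⟨key, key ▸ ?_⟩
  apply div_pos
  · have h1 : 0 < ρstar := by rw [hρ]; positivity
    have h0 : 0 ≤ ρstar * (ur - ul) ^ 2 / 2 := by positivity
    have h2 : 0 < (ρl + ρstar) * cl ^ 2 / (γ - 1) := by positivity
    have h3 : 0 < (ρstar + ρr) * cr ^ 2 / (γ - 1) := by positivity
    linarith
  · positivity
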